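/- Let q be a prime power, a ∣ ℓ, m < ℓ with m ∣ ℓ and gcd(a, m) = 1, and set W = F_{q^m}, T = F_{q^a} (as F_q-subspaces of F_{q^ℓ}). Then the sum over all γ ∈ F_{q^ℓ}* of dim_{F_q}(γT ∩ W) equals (q^a − 1)(q^m − 1)/(q − 1). -/

import Mathlib

open Module
open Finset


private lemma pow_pow_fix_mul {F : Type*} [Monoid F] {x : F} {Q u : ℕ}
    (hu : x ^ Q ^ u = x) : ∀ c, x ^ Q ^ (u * c) = x := by
  intro c
  induction c with
  | zero => simp
  | succ c ih =>
    have h : Q ^ (u * (c + 1)) = Q ^ (u * c) * Q ^ u := by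
      rw [← pow_add]; ring_nf
    rw [h, pow_mul, ih, hu]

private lemma pow_fix_sub {F : Type*} [Field F] (p : ℕ) [hp : Fact p.Prime] [CharP F p]
    (k : ℕ) {x : F} {s t : ℕ} (hts : t ≤ s)
    (ht : x ^ (p ^ k) ^ t = x) (hs : x ^ (p ^ k) ^ s = x) :
    x ^ (p ^ k) ^ (s - t) = x := by
  have hinj : Function.Injective (fun z : F => z ^ p ^ (k * t)) := by
    intro z w h
    simp only at h
    have h2 : (z - w) ^ p ^ (k * t) = 0 := by
      rw [sub_pow_char_pow, h, sub_self]
    have h3 : z - w = 0 := (pow_eq_zero_iff (pow_ne_zero (k * t) hp.out.pos.ne')).mp h2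
    exact sub_eq_zero.mp h3
  apply hinj
  simp only
  have hpk : p ^ (k * t) = (p ^ k) ^ t := by rw [pow_mul]
  rw [hpk, ← pow_mul, ← pow_add, Nat.sub_add_cancel hts, hs, ht]

private lemma pow_fix_gcd {F : Type*} [Field F] (p : ℕ) [Fact p.Prime] [CharP F p]
    (k : ℕ) {x : F} : ∀ u v : ℕ, x ^ (p ^ k) ^ u = x → x ^ (p ^ k) ^ v = x →
    x ^ (p ^ k) ^ Nat.gcd u v = x := by
  intro u v
  induction u, v using Nat.gcd.induction with
  | H0 v => intro _ hv; simpa using hv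
  | H1 u v hu ih =>
    intro hu' hv'
    rw [Nat.gcd_rec]
    apply ih _ hu'
    have hmul := pow_pow_fix_mul hu' (v / u)
    have hmad := Nat.mod_add_div v u
    have hmeq : v % u = v - u * (v / u) := by omega
    have hle : u * (v / u) ≤ v := by omega
    rw [hmeq]
    exact pow_fix_sub p k hle hmul hv'

private lemma mem_range_of_pow_card {K F : Type*} [Field K] [Field F] [Algebra K F]
    [Fintype K] [Fintype F] [DecidableEq F] {x : F} (h : x ^ Fintype.card K = x) :
    x ∈ Set.range (algebraMap K F) := by
  classical
  set q := Fintype.card K with hqdef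
  have hq2 : 1 < q := Fintype.one_lt_card
  set P : Polynomial F := Polynomial.X ^ q - Polynomial.X with hPdef
  have hPdeg : P.natDegree = q := by
    rw [hPdef, Polynomial.natDegree_sub_eq_left_of_natDegree_lt] <;>
      simp [Polynomial.natDegree_X_pow, Polynomial.natDegree_X] <;> omega
  have hP0 : P ≠ 0 := by
    intro h0
    rw [h0, Polynomial.natDegree_zero] at hPdeg
    omega
  set R : Finset F := univ.filter fun z => z ^ q = z with hRdef
  have hsub : R.val ⊆ P.roots := by
    intro z hz
    rw [Finset.mem_val, hRdef, Finset.mem_filter] at hz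
    rw [Polynomial.mem_roots hP0]
    simp [hPdef, Polynomial.IsRoot, sub_eq_zero, hz.2]
  have hcard : R.card ≤ q := hPdeg ▸ Polynomial.card_le_degree_of_subset_roots hsub
  set I : Finset F := univ.image (algebraMap K F) with hIdef
  have hIR : I ⊆ R := by
    intro z hz
    rw [hIdef, Finset.mem_image] at hz
    obtain ⟨c, _, rfl⟩ := hz
    rw [hRdef, Finset.mem_filter]
    refine ⟨Finset.mem_univ _, ?_⟩
    rw [← map_pow, FiniteField.pow_card]
  have hIcard : I.card = q := by
    rw [hIdef, Finset.card_image_of_injective _ (algebraMap K F).injective, Finset.card_univ]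
  have hEq : I = R := Finset.eq_of_subset_of_card_le hIR (by omega)
  have hxR : x ∈ R := by rw [hRdef, Finset.mem_filter]; exact ⟨Finset.mem_univ _, h⟩
  rw [← hEq, hIdef, Finset.mem_image] at hxR
  obtain ⟨c, _, rfl⟩ := hxR
  exact Set.mem_range_self c


/-- with `W = F_{q^m}`, `T = F_{q^a}`, `a ∣ ℓ`, `m ∣ ℓ`, `m < ℓ`,
`gcd(a,m) = 1`, the sum over all nonzero `γ` of `dim(γT ∩ W)` equals
`(q^a − 1)(q^m − 1)/(q − 1)`. -/
theorem stmt4 {K F : Type*} [Field K] [Field F] [Algebra K F] [Fintype K] [Fintype F]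
    [DecidableEq F]
    (q ℓ a m : ℕ) (hq : Fintype.card K = q) (hℓ : finrank K F = ℓ)
    (ha : a ∣ ℓ) (hm : m ∣ ℓ) (hmℓ : m < ℓ) (ham : Nat.gcd a m = 1)
    (T W : IntermediateField K F) (hT : finrank K T = a) (hW : finrank K W = m) :
    ∑ γ ∈ Finset.univ.filter (fun γ : F => γ ≠ 0),
      finrank K
        ↥((Subalgebra.toSubmodule T.toSubalgebra).map (LinearMap.mulLeft K γ) ⊓
          Subalgebra.toSubmodule W.toSubalgebra)
      = (q ^ a - 1) * (q ^ m - 1) / (q - 1) := by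
  classical
  set S : F → Submodule K F := fun γ =>
    (Subalgebra.toSubmodule T.toSubalgebra).map (LinearMap.mulLeft K γ) ⊓
      Subalgebra.toSubmodule W.toSubalgebra with hSdef
  have hq2 : 2 ≤ q := by rw [← hq]; exact Fintype.one_lt_card
  -- membership description
  have memS : ∀ γ x : F, x ∈ S γ ↔ (∃ t ∈ T, γ * t = x) ∧ x ∈ W := by
    intro γ x
    simp [hSdef, Submodule.mem_inf, Submodule.mem_map, LinearMap.mulLeft_apply]
  -- characteristic
  obtain ⟨p, hpc⟩ := CharP.exists F
  haveI : CharP F p := hpc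
  have hpprime : p.Prime := CharP.char_is_prime F p
  haveI : Fact p.Prime := ⟨hpprime⟩
  haveI : CharP K p := (algebraMap K F).charP (algebraMap K F).injective p
  obtain ⟨k, -, hqpk⟩ := FiniteField.card K p
  rw [hq] at hqpk
  -- elements of an intermediate field are fixed by q ^ finrank power
  have fixE : ∀ (E : IntermediateField K F) (x : F), x ∈ E → x ^ q ^ finrank K E = x := by
    intro E x hx
    haveI : Fintype ↥E := Fintype.ofFinite _
    have hc : Fintype.card ↥E = q ^ finrank K ↥E := by rw [← hq]; exact card_eq_pow_finrank
    have h1 := FiniteField.pow_card (⟨x, hx⟩ : ↥E)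
    rw [hc] at h1
    have h2 := congrArg (Subtype.val) h1
    push_cast at h2
    simpa using h2
  -- key: elements of T ∩ W are in the base field
  have rkey : ∀ r : F, r ∈ T → r ∈ W → ∃ c : K, algebraMap K F c = r := by
    intro r hrT hrW
    have h1 : r ^ q ^ a = r := hT ▸ fixE T r hrT
    have h2 : r ^ q ^ m = r := hW ▸ fixE W r hrW
    rw [hqpk] at h1 h2
    have h3 := pow_fix_gcd p k a m h1 h2
    rw [ham, pow_one, ← hqpk, ← hq] at h3
    obtain ⟨c, hc⟩ := mem_range_of_pow_card h3
    exact ⟨c, hc⟩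
  -- dimension bound
  haveI : Module.Finite K F := Module.Finite.of_finite
  have dimle : ∀ γ : F, γ ≠ 0 → finrank K ↥(S γ) ≤ 1 := by
    intro γ hγ
    by_cases hbot : S γ = ⊥
    · rw [hbot, finrank_bot]; omega
    · obtain ⟨x₀, hx₀S, hx₀⟩ := Submodule.exists_mem_ne_zero_of_ne_bot hbot
      have hle : S γ ≤ Submodule.span K {x₀} := by
        intro y hyS
        obtain ⟨⟨ty, htyT, hty⟩, hyW⟩ := (memS γ y).1 hyS
        obtain ⟨⟨tx, htxT, htx⟩, hxW⟩ := (memS γ x₀).1 hx₀S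
        have htx0 : tx ≠ 0 := by
          rintro rfl
          rw [mul_zero] at htx
          exact hx₀ htx.symm
        have hrT : y * x₀⁻¹ ∈ T := by
          have : y * x₀⁻¹ = ty * tx⁻¹ := by
            rw [← hty, ← htx]
            field_simp
          rw [this]
          exact mul_mem htyT (inv_mem htxT)
        have hrW : y * x₀⁻¹ ∈ W := mul_mem hyW (inv_mem hxW)
        obtain ⟨c, hc⟩ := rkey _ hrT hrW
        have hyc : y = c • x₀ := by
          rw [Algebra.smul_def, hc, inv_mul_cancel_right₀ hx₀]
        rw [hyc]
        exact Submodule.smul_mem _ _ (Submodule.mem_span_singleton_self x₀)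
      calc finrank K ↥(S γ) ≤ finrank K ↥(Submodule.span K {x₀}) := Submodule.finrank_mono hle
        _ = 1 := finrank_span_singleton hx₀
  -- step A
  have stepA : ∀ γ : F, γ ≠ 0 →
      (univ.filter fun x : F => x ∈ S γ ∧ x ≠ 0).card = (q - 1) * finrank K ↥(S γ) := by
    intro γ hγ
    haveI : Fintype ↥(S γ) := Fintype.ofFinite _
    have hcard : Fintype.card ↥(S γ) = q ^ finrank K ↥(S γ) := by
      rw [← hq]; exact card_eq_pow_finrank
    have hfc : (univ.filter fun x : F => x ∈ S γ).card = q ^ finrank K ↥(S γ) := by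
      rw [← hcard]
      exact (Fintype.card_of_subtype _ (fun x => by simp)).symm
    have h0 : (0 : F) ∈ univ.filter (fun x : F => x ∈ S γ) := by
      simp [Submodule.zero_mem]
    have herase : (univ.filter fun x : F => x ∈ S γ ∧ x ≠ 0)
        = (univ.filter fun x : F => x ∈ S γ).erase 0 := by
      ext x
      simp [Finset.mem_erase, and_comm]
    rw [herase, Finset.card_erase_of_mem h0, hfc]
    rcases Nat.le_one_iff_eq_zero_or_eq_one.mp (dimle γ hγ) with h | h <;> rw [h] <;> simp
  -- Pairs
  set Pairs : Finset (F × F) :=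
    univ.filter (fun pr : F × F => pr.1 ≠ 0 ∧ pr.2 ∈ S pr.1 ∧ pr.2 ≠ 0) with hPairs
  have stepB : Pairs.card = ∑ γ ∈ univ.filter (fun γ : F => γ ≠ 0),
      (univ.filter fun x : F => x ∈ S γ ∧ x ≠ 0).card := by
    rw [Finset.card_eq_sum_card_fiberwise
      (f := Prod.fst) (t := univ.filter (fun γ : F => γ ≠ 0))
      (by intro pr hpr; simp only [Finset.mem_coe, hPairs, Finset.mem_filter] at hpr; simp [hpr.2.1])]
    apply Finset.sum_congr rfl
    intro γ hγ
    rw [Finset.mem_filter] at hγ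
    apply Finset.card_nbij' (i := fun pr => pr.2) (j := fun x => (γ, x))
    · intro pr hpr
      simp only [Finset.mem_coe, hPairs, Finset.mem_filter, Finset.mem_univ, true_and] at hpr ⊢
      obtain ⟨⟨h1, h2, h3⟩, h4⟩ := hpr
      exact ⟨h4 ▸ h2, h3⟩
    · intro x hx
      simp only [Finset.mem_coe, hPairs, Finset.mem_filter, Finset.mem_univ, true_and] at hx ⊢
      exact ⟨⟨hγ.2, hx.1, hx.2⟩, trivial⟩
    · intro pr hpr
      simp only [Finset.mem_coe, hPairs, Finset.mem_filter] at hpr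
      exact Prod.ext hpr.2.symm rfl
    · intro x _; rfl
  have cardE : ∀ E : IntermediateField K F,
      (univ.filter fun t : F => t ∈ E ∧ t ≠ 0).card = q ^ finrank K E - 1 := by
    intro E
    haveI : Fintype ↥E := Fintype.ofFinite _
    have hc : Fintype.card ↥E = q ^ finrank K ↥E := by rw [← hq]; exact card_eq_pow_finrank
    have hfc : (univ.filter fun t : F => t ∈ E).card = q ^ finrank K ↥E := by
      rw [← hc]; exact (Fintype.card_of_subtype _ (fun x => by simp)).symm
    have h0 : (0 : F) ∈ univ.filter fun t : F => t ∈ E := by simp [zero_mem]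
    have herase : (univ.filter fun t : F => t ∈ E ∧ t ≠ 0)
        = (univ.filter fun t : F => t ∈ E).erase 0 := by
      ext x; simp [Finset.mem_erase, and_comm]
    rw [herase, Finset.card_erase_of_mem h0, hfc]
  have stepC : Pairs.card = (q ^ a - 1) * (q ^ m - 1) := by
    rw [← hT, ← hW, ← cardE T, ← cardE W, ← Finset.card_product]
    apply Finset.card_nbij' (i := fun pr => (pr.1⁻¹ * pr.2, pr.2))
      (j := fun pr => (pr.2 * pr.1⁻¹, pr.2))
    · intro pr hpr
      simp only [Finset.mem_coe, hPairs, Finset.mem_filter, Finset.mem_univ, true_and] at hpr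
      obtain ⟨h1, h2, h3⟩ := hpr
      obtain ⟨⟨t, htT, hteq⟩, hW'⟩ := (memS pr.1 pr.2).1 h2
      rw [Finset.mem_coe, Finset.mem_product, Finset.mem_filter, Finset.mem_filter]
      refine ⟨⟨Finset.mem_univ _, ?_, ?_⟩, Finset.mem_univ _, hW', h3⟩
      · show pr.1⁻¹ * pr.2 ∈ T; rw [← hteq, inv_mul_cancel_left₀ h1]; exact htT
      · exact mul_ne_zero (inv_ne_zero h1) h3
    · intro pr hpr
      rw [Finset.mem_coe, Finset.mem_product, Finset.mem_filter, Finset.mem_filter] at hpr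
      obtain ⟨⟨-, htT, ht0⟩, -, hwW, hw0⟩ := hpr
      simp only [Finset.mem_coe, hPairs, Finset.mem_filter, Finset.mem_univ, true_and]
      refine ⟨mul_ne_zero hw0 (inv_ne_zero ht0), ?_, hw0⟩
      rw [memS]
      exact ⟨⟨pr.1, htT, by rw [inv_mul_cancel_right₀ ht0]⟩, hwW⟩
    · intro pr hpr
      simp only [Finset.mem_coe, hPairs, Finset.mem_filter, Finset.mem_univ, true_and] at hpr
      obtain ⟨h1, h2, h3⟩ := hpr
      refine Prod.ext ?_ rfl
      simp only
      field_simp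
    · intro pr hpr
      rw [Finset.mem_coe, Finset.mem_product, Finset.mem_filter, Finset.mem_filter] at hpr
      obtain ⟨⟨-, htT, ht0⟩, -, hwW, hw0⟩ := hpr
      refine Prod.ext ?_ rfl
      simp only
      field_simp
  have key : (q ^ a - 1) * (q ^ m - 1)
      = (∑ γ ∈ univ.filter (fun γ : F => γ ≠ 0), finrank K ↥(S γ)) * (q - 1) := by
    rw [← stepC, stepB, Finset.sum_mul]
    apply Finset.sum_congr rfl
    intro γ hγ
    rw [Finset.mem_filter] at hγ
    rw [stepA γ hγ.2, mul_comm]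
  have hq1 : 0 < q - 1 := by omega
  show (∑ γ ∈ univ.filter (fun γ : F => γ ≠ 0), finrank K ↥(S γ))
      = (q ^ a - 1) * (q ^ m - 1) / (q - 1)
  exact (Nat.div_eq_of_eq_mul_left hq1 key).symm
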